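/- Suppose for each $r \ge 0$, $\Pr(|S| = r) = \frac{2^r}{r!} e^{-2}$ (i.e., $|S|$ is Poisson with mean 2), and let $\rho = 1/2$. Define $\phi_{d+1} = 1 - \sum_{r \ge 0} \Pr(|S|=r) \cdot (1 - \rho \phi_d)^r = 1 - e^{-\phi_d}$ with $\phi_1 \le 1$. Then for all $d \ge 1$, $\phi_d \le 4/d$. -/

import Mathlib

/-- Branching-process estimate: if `φ 1 ∈ [0,1]` and `φ (d+1) = 1 - exp (-φ d)`
for `d ≥ 1`, then `φ d ≤ 4/d` for all `d ≥ 1`. -/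
theorem stmt9 (φ : ℕ → ℝ) (hφ0 : 0 ≤ φ 1) (hφ1 : φ 1 ≤ 1)
    (hrec : ∀ d : ℕ, 1 ≤ d → φ (d + 1) = 1 - Real.exp (-φ d)) :
    ∀ d : ℕ, 1 ≤ d → φ d ≤ 4 / d := by
  have key : ∀ x : ℝ, 0 ≤ x → x ≤ 2 → 1 - Real.exp (-x) ≤ x - x^2/4 := by
    intro x hx hx2
    have h := Real.add_one_le_exp (-x/2)
    have h2 : (1 - x/2)^2 ≤ Real.exp (-x) := by
      have he : Real.exp (-x) = Real.exp (-x/2) * Real.exp (-x/2) := by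
        rw [← Real.exp_add]; ring_nf
      rw [he]
      have h0 : (0:ℝ) ≤ 1 - x/2 := by linarith
      have : -x/2 + 1 = 1 - x/2 := by ring
      rw [this] at h
      nlinarith [Real.exp_pos (-x/2)]
    nlinarith
  have main : ∀ d : ℕ, 1 ≤ d → 0 ≤ φ d ∧ φ d ≤ 1 ∧ φ d ≤ 4 / d := by
    intro d hd
    induction d with
    | zero => omega
    | succ n ih =>
      rcases Nat.lt_or_ge n 1 with h1 | h1
      · interval_cases n
        exact ⟨hφ0, hφ1, by norm_num; linarith⟩
      · obtain ⟨h0, hle1, h4⟩ := ih h1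
        have hr := hrec n h1
        have hexp_le : Real.exp (-φ n) ≤ 1 := by
          rw [show (1:ℝ) = Real.exp 0 by simp]
          exact Real.exp_le_exp.mpr (by linarith)
        have hnn : 0 ≤ φ (n + 1) := by rw [hr]; linarith
        have hub : φ (n + 1) ≤ 1 := by
          rw [hr]; have := Real.exp_pos (-φ n); linarith
        refine ⟨hnn, hub, ?_⟩
        have hkey := key (φ n) h0 (by linarith)
        rcases Nat.lt_or_ge n 4 with hn4 | hn4
        · -- n+1 ≤ 4, so 4/(n+1) ≥ 1
          have hcast : ((n:ℝ) + 1) ≤ 4 := by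
            have : (n:ℝ) ≤ 3 := by exact_mod_cast Nat.le_of_lt_succ hn4
            linarith
          have hpos : (0:ℝ) < (n:ℝ) + 1 := by positivity
          have : (1:ℝ) ≤ 4 / ((n:ℝ)+1) := by
            rw [le_div_iff₀ hpos]; linarith
          push_cast
          linarith
        · -- n ≥ 4
          have hn : (4:ℝ) ≤ (n:ℝ) := by exact_mod_cast hn4
          have hnpos : (0:ℝ) < (n:ℝ) := by linarith
          have hc1 : 4 / (n:ℝ) ≤ 1 := by
            rw [div_le_one hnpos]; linarith
          have hmono : φ n - (φ n)^2/4 ≤ 4/(n:ℝ) - (4/(n:ℝ))^2/4 := by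
            nlinarith [sq_nonneg (4/(n:ℝ) - φ n)]
          have hfinal : 4/(n:ℝ) - (4/(n:ℝ))^2/4 ≤ 4/((n:ℝ)+1) := by
            have h1p : (0:ℝ) < (n:ℝ) + 1 := by linarith
            rw [sub_le_iff_le_add, div_le_iff₀ hnpos]
            field_simp
            nlinarith
          push_cast
          rw [hr]
          linarith
  intro d hd
  exact (main d hd).2.2
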